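/- arXiv:2109.13917 — 2 statements merged into one kernel-verified Lean document; each statement's English description precedes it below -/
import Mathlib

section
/- If G : {−1,1}^n → ℝ is a multilinear polynomial of degree at most t and A is the set of x ∈ {−1,1}^n where G(x) = ∏_{i=1}^n x_i, then every function A → ℝ can be represented by a multilinear polynomial of degree at most t + n/2, and consequently |A| ≤ ∑_{k=0}^{⌊n/2⌋+t} C(n,k). -/
/-- Map a Boolean to the corresponding element of `{-1, 1} ⊆ ℝ`. -/
noncomputable def chi (b : Bool) : ℝ := if b then 1 else -1

open MvPolynomial Finset

lemma chi_mul_self (b : Bool) : chi b * chi b = 1 := by cases b <;> simp [chi]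

lemma chi_pow (b : Bool) (k : ℕ) : chi b ^ k = if Even k then 1 else chi b := by
  cases b with
  | false =>
    rcases Nat.even_or_odd k with h | h
    · simp [chi, h.neg_one_pow, h]
    · simp [chi, h.neg_one_pow, Nat.not_even_iff_odd.2 h]
  | true => simp [chi]

lemma chi_prod_delta {n : ℕ} (z x : Fin n → Bool) :
    ∏ i, (1 + chi (z i) * chi (x i)) = if z = x then (2:ℝ)^n else 0 := by
  by_cases h : z = x
  · subst h
    simp [chi_mul_self, one_add_one_eq_two]
  · rw [if_neg h]
    obtain ⟨i, hi⟩ : ∃ i, z i ≠ x i := by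
      by_contra hc
      push_neg at hc
      exact h (funext hc)
    refine Finset.prod_eq_zero (Finset.mem_univ i) ?_
    revert hi
    cases z i <;> cases x i <;> simp [chi]

lemma sum_prod_subsets {n : ℕ} (g : Fin n → ℝ) :
    ∑ S : Finset (Fin n), ∏ i ∈ S, g i = ∏ i, (1 + g i) := by
  classical
  have h1 : ∏ i, (g i + 1) = ∑ S ∈ (Finset.univ : Finset (Fin n)).powerset,
      (∏ i ∈ S, g i) * ∏ i ∈ Finset.univ \ S, (1:ℝ) := Finset.prod_add g 1 Finset.univ
  simp only [Finset.prod_const_one, mul_one, Finset.powerset_univ] at h1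
  rw [← h1]
  exact Finset.prod_congr rfl fun i _ => (add_comm _ _)

/-- The low-degree representative of the monomial `∏ i ∈ S, X i`. -/
noncomputable def low (n t : ℕ) (G : MvPolynomial (Fin n) ℝ) (S : Finset (Fin n)) :
    MvPolynomial (Fin n) ℝ :=
  if S.card ≤ t + n / 2 then ∏ i ∈ S, X i else G * ∏ i ∈ Sᶜ, X i

lemma low_deg (n t : ℕ) (G : MvPolynomial (Fin n) ℝ) (hG : G.totalDegree ≤ t)
    (S : Finset (Fin n)) : (low n t G S).totalDegree ≤ t + n / 2 := by
  classical
  unfold low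
  split_ifs with h
  · refine le_trans (totalDegree_finset_prod _ _) ?_
    simp only [totalDegree_X]
    simpa using h
  · refine le_trans (totalDegree_mul _ _) ?_
    have h2 : (∏ i ∈ Sᶜ, (X i : MvPolynomial (Fin n) ℝ)).totalDegree ≤ Sᶜ.card := by
      refine le_trans (totalDegree_finset_prod _ _) ?_
      simp [totalDegree_X]
    have h3 : Sᶜ.card = n - S.card := by
      rw [Finset.card_compl]
      simp
    have h4 : S.card ≤ n := by
      simpa using Finset.card_le_card (Finset.subset_univ S)
    push_neg at h
    omega

lemma low_eval (n t : ℕ) (G : MvPolynomial (Fin n) ℝ) (x : Fin n → Bool)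
    (hx : MvPolynomial.eval (fun i => chi (x i)) G = ∏ i : Fin n, chi (x i))
    (S : Finset (Fin n)) :
    MvPolynomial.eval (fun i => chi (x i)) (low n t G S) = ∏ i ∈ S, chi (x i) := by
  classical
  unfold low
  split_ifs with h
  · simp
  · rw [map_mul, hx]
    have h1 : MvPolynomial.eval (fun i => chi (x i)) (∏ i ∈ Sᶜ, X i)
        = ∏ i ∈ Sᶜ, chi (x i) := by simp
    rw [h1, ← Finset.prod_mul_prod_compl S (fun i => chi (x i)), mul_assoc,
      ← Finset.prod_mul_distrib]
    simp [chi_mul_self]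

lemma key (n t : ℕ) (G : MvPolynomial (Fin n) ℝ) (hG : G.totalDegree ≤ t)
    (A : Finset (Fin n → Bool))
    (hA' : ∀ x ∈ A, MvPolynomial.eval (fun i => chi (x i)) G = ∏ i : Fin n, chi (x i))
    (f : (Fin n → Bool) → ℝ) :
    ∃ Q : MvPolynomial (Fin n) ℝ, Q.totalDegree ≤ t + n / 2 ∧
      ∀ x ∈ A, MvPolynomial.eval (fun i => chi (x i)) Q = f x := by
  classical
  refine ⟨∑ z : Fin n → Bool, ∑ S : Finset (Fin n),
      C (f z / 2 ^ n * ∏ i ∈ S, chi (z i)) * low n t G S, ?_, ?_⟩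
  · refine le_trans (totalDegree_finset_sum _ _) (Finset.sup_le fun z _ => ?_)
    refine le_trans (totalDegree_finset_sum _ _) (Finset.sup_le fun S _ => ?_)
    refine le_trans (totalDegree_mul _ _) ?_
    rw [totalDegree_C, zero_add]
    exact low_deg n t G hG S
  · intro x hx
    have hGx := hA' x hx
    simp only [map_sum, map_mul, eval_C, low_eval n t G x hGx]
    have hkey : ∀ z : Fin n → Bool,
        ∑ S : Finset (Fin n), f z / 2 ^ n * (∏ i ∈ S, chi (z i)) * ∏ i ∈ S, chi (x i)
          = f z / 2 ^ n * (if z = x then (2:ℝ) ^ n else 0) := by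
      intro z
      rw [← chi_prod_delta z x, ← sum_prod_subsets (fun i => chi (z i) * chi (x i)),
        Finset.mul_sum]
      refine Finset.sum_congr rfl fun S _ => ?_
      rw [mul_assoc, ← Finset.prod_mul_distrib]
    simp only [hkey, mul_ite, mul_zero]
    rw [Finset.sum_ite_eq' Finset.univ x (fun z => f z / 2 ^ n * 2 ^ n)]
    simp only [Finset.mem_univ, if_pos]
    field_simp

theorem stmt_4 (n t : ℕ) (G : MvPolynomial (Fin n) ℝ) (hG : G.totalDegree ≤ t)
    (A : Finset (Fin n → Bool))
    (hA : A = Finset.univ.filter (fun x : Fin n → Bool =>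
      MvPolynomial.eval (fun i => chi (x i)) G = ∏ i : Fin n, chi (x i))) :
    (∀ f : (Fin n → Bool) → ℝ, ∃ Q : MvPolynomial (Fin n) ℝ,
        Q.totalDegree ≤ t + n / 2 ∧
        ∀ x ∈ A, MvPolynomial.eval (fun i => chi (x i)) Q = f x) ∧
      A.card ≤ ∑ k ∈ Finset.range (n / 2 + t + 1), n.choose k := by
  classical
  have hA' : ∀ x ∈ A, MvPolynomial.eval (fun i => chi (x i)) G = ∏ i : Fin n, chi (x i) := by
    intro x hx
    rw [hA, Finset.mem_filter] at hx
    exact hx.2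
  refine ⟨fun f => key n t G hG A hA' f, ?_⟩
  -- linear algebra bound
  set v : Finset (Fin n) → (↥A → ℝ) := fun S a => ∏ i ∈ S, chi (a.1 i) with hv
  set I : Finset (Finset (Fin n)) :=
    Finset.univ.filter (fun S => S.card ≤ t + n / 2) with hI
  have hspan : Submodule.span ℝ (v '' ↑I) = ⊤ := by
    rw [eq_top_iff]
    rintro g -
    obtain ⟨Q, hQd, hQe⟩ := key n t G hG A hA'
      (fun x => if hx : x ∈ A then g ⟨x, hx⟩ else 0)
    have hg : g = fun a : ↥A => MvPolynomial.eval (fun i => chi (a.1 i)) Q := by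
      funext a
      rw [hQe a.1 a.2]
      simp [a.2]
    have hrep : (fun a : ↥A => MvPolynomial.eval (fun i => chi (a.1 i)) Q)
        = ∑ d ∈ Q.support, Q.coeff d •
            v (d.support.filter fun i => ¬ Even (d i)) := by
      funext a
      rw [eval_eq]
      simp only [Finset.sum_apply, Pi.smul_apply, smul_eq_mul, hv]
      refine Finset.sum_congr rfl fun d hd => ?_
      congr 1
      calc ∏ i ∈ d.support, chi (a.1 i) ^ d i
          = ∏ i ∈ d.support, (if Even (d i) then 1 else chi (a.1 i)) :=
            Finset.prod_congr rfl fun i _ => chi_pow _ _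
        _ = (∏ i ∈ d.support.filter (fun i => Even (d i)), (1:ℝ)) *
              ∏ i ∈ d.support.filter (fun i => ¬ Even (d i)), chi (a.1 i) :=
            Finset.prod_ite _ _
        _ = ∏ i ∈ d.support.filter (fun i => ¬ Even (d i)), chi (a.1 i) := by
            simp
    rw [hg, hrep]
    refine Submodule.sum_mem _ fun d hd => Submodule.smul_mem _ _ (Submodule.subset_span ?_)
    refine ⟨_, ?_, rfl⟩
    simp only [hI, Finset.coe_filter, Set.mem_setOf_eq, Finset.mem_univ, true_and]
    calc (d.support.filter fun i => ¬ Even (d i)).card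
        ≤ d.support.card := Finset.card_filter_le _ _
      _ ≤ ∑ i ∈ d.support, d i := by
          rw [Finset.card_eq_sum_ones]
          exact Finset.sum_le_sum fun i hi =>
            Nat.one_le_iff_ne_zero.2 (Finsupp.mem_support_iff.1 hi)
      _ = d.sum (fun _ e => e) := rfl
      _ ≤ Q.totalDegree := le_totalDegree hd
      _ ≤ t + n / 2 := hQd
  have h1 : A.card = Module.finrank ℝ (↥A → ℝ) := by
    rw [Module.finrank_fintype_fun_eq_card, Fintype.card_coe]
  have h2 : Module.finrank ℝ (↥A → ℝ) ≤ (v '' ↑I).toFinset.card := by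
    calc Module.finrank ℝ (↥A → ℝ)
        = Module.finrank ℝ (⊤ : Submodule ℝ (↥A → ℝ)) := (finrank_top ℝ _).symm
      _ = Module.finrank ℝ (Submodule.span ℝ (v '' ↑I)) := by rw [hspan]
      _ ≤ (v '' ↑I).toFinset.card := finrank_span_le_card _
  have h3 : (v '' ↑I).toFinset.card ≤ I.card := by
    rw [Set.toFinset_image]
    simpa using Finset.card_image_le
  have h4 : I.card = ∑ k ∈ Finset.range (t + n / 2 + 1), n.choose k := by
    have hbU : I = (Finset.range (t + n / 2 + 1)).biUnion
        (fun k => Finset.powersetCard k Finset.univ) := by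
      ext S
      simp only [hI, Finset.mem_filter, Finset.mem_univ, true_and, Finset.mem_biUnion,
        Finset.mem_range, Finset.mem_powersetCard_univ, Nat.lt_succ_iff]
      exact ⟨fun h => ⟨S.card, h, rfl⟩, fun ⟨k, hk, e⟩ => e ▸ hk⟩
    rw [hbU, Finset.card_biUnion]
    · refine Finset.sum_congr rfl fun k _ => ?_
      rw [Finset.card_powersetCard]
      simp
    · intro k _ l _ hkl
      simp only [Finset.disjoint_left, Finset.mem_powersetCard_univ]
      intro S hS hS'
      exact hkl (hS ▸ hS')
  have hcomm : t + n / 2 = n / 2 + t := Nat.add_comm _ _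
  rw [← hcomm]
  omega
end

section
/- The threshold function Th^n_k (which outputs 1 iff at least k of n Boolean inputs are 1) cannot be expressed as a CNF in which every clause has width at most n − k − 1, for 1 ≤ k ≤ n − 1. -/
/-- A clause is a finite set of literals `(variable, sign)`; it is satisfied by `x`
iff some literal `(i, b)` in it has `x i = b`. A CNF is a finite set of clauses. -/
theorem stmt_8 (n k : ℕ) (hk1 : 1 ≤ k) (hkn : k ≤ n - 1) :
    ¬ ∃ C : Finset (Finset (Fin n × Bool)),
      (∀ c ∈ C, c.card ≤ n - k - 1) ∧
      (∀ x : Fin n → Bool,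
        (k ≤ (Finset.univ.filter (fun i => x i = true)).card ↔
          ∀ c ∈ C, ∃ l ∈ c, x l.1 = l.2)) := by
  rintro ⟨C, hw, hC⟩
  have h0 : ¬ (k ≤ (Finset.univ.filter
      (fun i => (fun _ : Fin n => false) i = true)).card) := by
    simp; omega
  rw [hC] at h0
  push_neg at h0
  obtain ⟨c, hcC, hc⟩ := h0
  set y : Fin n → Bool := fun i => if i ∈ c.image Prod.fst then false else true with hy
  have hcount : k ≤ (Finset.univ.filter (fun i => y i = true)).card := by
    have h1 : (Finset.univ.filter (fun i => y i = true)) = (c.image Prod.fst)ᶜ := by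
      ext i; simp [hy]
    rw [h1, Finset.card_compl]
    have h2 := Finset.card_image_le (s := c) (f := Prod.fst)
    have h3 := hw c hcC
    simp only [Fintype.card_fin]
    omega
  obtain ⟨l, hl, hyl⟩ := (hC y).mp hcount c hcC
  have h4 : y l.1 = false := by
    simp only [hy, if_pos (Finset.mem_image.mpr ⟨l, hl, rfl⟩)]
  have h5 := hc l hl
  simp_all
end
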